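/- arXiv:2503.20736 — 2 statements merged into one kernel-verified Lean document; each statement's English description precedes it below -/
import Mathlib

section
/- For H ∈ (0,1) with H ≠ 1/2, as k → ∞ the fractional Gaussian noise autocovariance satisfies ρ(k) / (H(2H-1) k^{2H-2}) → 1, i.e., ρ(k) ~ H(2H-1)k^{2H-2}. -/
open Filter Set Real

/-- fGn autocovariance for positive lags. -/
noncomputable def fgnRhoNat (H : ℝ) (k : ℕ) : ℝ :=
  (1 / 2) * (((k : ℝ) + 1) ^ (2 * H) - 2 * (k : ℝ) ^ (2 * H) + ((k : ℝ) - 1) ^ (2 * H))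

lemma hasDerivAt_aux1 (p u : ℝ) (hu : 0 < 1 + u) :
    HasDerivAt (fun u : ℝ => (1 + u) ^ p) (p * (1 + u) ^ (p - 1)) u := by
  have h := ((hasDerivAt_id u).const_add 1).rpow_const (p := p) (Or.inl (ne_of_gt hu))
  simpa using h

lemma hasDerivAt_aux2 (p u : ℝ) (hu : 0 < 1 - u) :
    HasDerivAt (fun u : ℝ => (1 - u) ^ p) (-(p * (1 - u) ^ (p - 1))) u := by
  have h := ((hasDerivAt_id u).const_sub 1).rpow_const (p := p) (Or.inl (ne_of_gt hu))
  simpa [mul_comm] using h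

lemma key (H : ℝ) (h0 : 0 < H) (h1 : H < 1) (hne : H ≠ 1 / 2) :
    Tendsto (fun u : ℝ => ((1 + u) ^ (2 * H) + (1 - u) ^ (2 * H) - 2) /
      (2 * H * (2 * H - 1) * u ^ 2)) (nhdsWithin 0 (Ioi 0)) (nhds 1) := by
  have hH0 : (2 : ℝ) * H ≠ 0 := by positivity
  have hH1 : (2 : ℝ) * H - 1 ≠ 0 := by
    intro h; apply hne; linarith
  -- inner limit: f₂'/g₂' → 1
  have hcont1 : Tendsto (fun u : ℝ => (1 + u) ^ (2 * H - 2)) (nhdsWithin 0 (Ioi 0)) (nhds 1) := by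
    have : ContinuousAt (fun u : ℝ => (1 + u) ^ (2 * H - 2)) 0 := by
      have h1 : ContinuousAt (fun u : ℝ => 1 + u) 0 := by fun_prop
      have h2 : ContinuousAt (fun x : ℝ => x ^ (2 * H - 2)) ((1 : ℝ) + 0) := by
        apply Real.continuousAt_rpow_const
        norm_num
      exact h2.comp h1
    simpa using this.continuousWithinAt.tendsto
  have hcont2 : Tendsto (fun u : ℝ => (1 - u) ^ (2 * H - 2)) (nhdsWithin 0 (Ioi 0)) (nhds 1) := by
    have : ContinuousAt (fun u : ℝ => (1 - u) ^ (2 * H - 2)) 0 := by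
      have h1 : ContinuousAt (fun u : ℝ => 1 - u) 0 := by fun_prop
      have h2 : ContinuousAt (fun x : ℝ => x ^ (2 * H - 2)) ((1 : ℝ) - 0) := by
        apply Real.continuousAt_rpow_const
        norm_num
      exact h2.comp h1
    simpa using this.continuousWithinAt.tendsto
  -- second L'Hopital level
  have lvl2 : Tendsto (fun u : ℝ =>
      (2 * H * ((1 + u) ^ (2 * H - 1)) - 2 * H * ((1 - u) ^ (2 * H - 1))) /
      (2 * H * (2 * H - 1) * (2 * u))) (nhdsWithin 0 (Ioi 0)) (nhds 1) := by
    apply HasDerivAt.lhopital_zero_right_on_Ioo (a := (0:ℝ)) (b := 1/2)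
      (f' := fun u => 2 * H * ((2 * H - 1) * (1 + u) ^ (2 * H - 2))
        + 2 * H * ((2 * H - 1) * (1 - u) ^ (2 * H - 2)))
      (g' := fun u => 2 * H * (2 * H - 1) * 2) (by norm_num)
    · intro x hx
      have ha := hasDerivAt_aux1 (2 * H - 1) x (by linarith [hx.1])
      have hb := hasDerivAt_aux2 (2 * H - 1) x (by nlinarith [hx.2])
      have := ((ha.const_mul (2 * H)).sub (hb.const_mul (2 * H)))
      exact this.congr_deriv (by ring)
    · intro x hx
      simpa using ((hasDerivAt_id x).const_mul 2).const_mul (2 * H * (2 * H - 1))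
    · intro x hx
      intro h
      have : (2:ℝ) * H * (2 * H - 1) * 2 ≠ 0 := by
        simp [hH0, hH1]
      exact this h
    · have : ContinuousAt (fun u : ℝ =>
        2 * H * ((1 + u) ^ (2 * H - 1)) - 2 * H * ((1 - u) ^ (2 * H - 1))) 0 := by
        have ha : ContinuousAt (fun u : ℝ => (1 + u) ^ (2 * H - 1)) 0 := by
          exact (Real.continuousAt_rpow_const _ _ (by norm_num)).comp (by fun_prop)
        have hb : ContinuousAt (fun u : ℝ => (1 - u) ^ (2 * H - 1)) 0 := by
          exact (Real.continuousAt_rpow_const _ _ (by norm_num)).comp (by fun_prop)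
        exact ((ha.const_mul _).sub (hb.const_mul _))
      have h0 : (fun u : ℝ =>
        2 * H * ((1 + u) ^ (2 * H - 1)) - 2 * H * ((1 - u) ^ (2 * H - 1))) 0 = 0 := by
        simp
      have := (this.continuousWithinAt (s := Ioi (0:ℝ))).tendsto
      norm_num at this
      exact this
    · have : Tendsto (fun u : ℝ => 2 * H * (2 * H - 1) * (2 * u)) (nhdsWithin 0 (Ioi 0))
        (nhds (2 * H * (2 * H - 1) * (2 * 0))) := by
        apply Tendsto.mono_left _ nhdsWithin_le_nhds
        exact Continuous.tendsto (by continuity) 0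
      simpa using this
    · have key : Tendsto (fun u : ℝ =>
        ((1 + u) ^ (2 * H - 2) + (1 - u) ^ (2 * H - 2)) / 2) (nhdsWithin 0 (Ioi 0)) (nhds 1) := by
        have := (hcont1.add hcont2).div_const 2
        norm_num at this
        exact this
      apply key.congr'
      filter_upwards [self_mem_nhdsWithin] with u hu
      have hu' : (u:ℝ) ≠ 0 := ne_of_gt hu
      field_simp
  -- first L'Hopital level
  apply HasDerivAt.lhopital_zero_right_on_Ioo (a := (0:ℝ)) (b := 1/2)
    (f' := fun u => 2 * H * ((1 + u) ^ (2 * H - 1)) - 2 * H * ((1 - u) ^ (2 * H - 1)))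
    (g' := fun u => 2 * H * (2 * H - 1) * (2 * u)) (by norm_num)
  · intro x hx
    have ha := hasDerivAt_aux1 (2 * H) x (by linarith [hx.1])
    have hb := hasDerivAt_aux2 (2 * H) x (by nlinarith [hx.2])
    have := (ha.add hb).sub_const 2
    exact this.congr_deriv (by ring)
  · intro x hx
    have := ((hasDerivAt_pow 2 x).const_mul (2 * H * (2 * H - 1)))
    exact this.congr_deriv (by ring)
  · intro x hx h
    have hx0 : x ≠ 0 := ne_of_gt hx.1
    have : (2:ℝ) * H * (2 * H - 1) * (2 * x) ≠ 0 := by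
      simp [hH0, hH1, hx0]
    exact this h
  · have : ContinuousAt (fun u : ℝ => (1 + u) ^ (2 * H) + (1 - u) ^ (2 * H) - 2) 0 := by
      have ha : ContinuousAt (fun u : ℝ => (1 + u) ^ (2 * H)) 0 :=
        (Real.continuousAt_rpow_const _ _ (by norm_num)).comp (by fun_prop)
      have hb : ContinuousAt (fun u : ℝ => (1 - u) ^ (2 * H)) 0 :=
        (Real.continuousAt_rpow_const _ _ (by norm_num)).comp (by fun_prop)
      exact (ha.add hb).sub (continuousAt_const)
    have h0 : (fun u : ℝ => (1 + u) ^ (2 * H) + (1 - u) ^ (2 * H) - 2) 0 = 0 := by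
      norm_num
    have := (this.continuousWithinAt (s := Ioi (0:ℝ))).tendsto
    norm_num at this
    exact this
  · have : Tendsto (fun u : ℝ => 2 * H * (2 * H - 1) * u ^ 2) (nhdsWithin 0 (Ioi 0))
      (nhds (2 * H * (2 * H - 1) * 0 ^ 2)) := by
      apply Tendsto.mono_left _ nhdsWithin_le_nhds
      exact Continuous.tendsto (by continuity) 0
    simpa using this
  · exact lvl2

theorem fgnRho_asymptotic (H : ℝ) (hH : H ∈ Set.Ioo (0 : ℝ) 1) (hH2 : H ≠ 1 / 2) :
    Tendsto (fun k : ℕ => fgnRhoNat H k / (H * (2 * H - 1) * (k : ℝ) ^ (2 * H - 2)))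
      atTop (nhds 1) := by
  obtain ⟨h0, h1⟩ := hH
  have hH0 : H ≠ 0 := ne_of_gt h0
  have hH1 : (2 : ℝ) * H - 1 ≠ 0 := by intro h; apply hH2; linarith
  have hinv : Tendsto (fun k : ℕ => 1 / (k : ℝ)) atTop (nhdsWithin 0 (Ioi 0)) := by
    apply tendsto_nhdsWithin_of_tendsto_nhds_of_eventually_within
    · exact tendsto_one_div_atTop_nhds_zero_nat
    · filter_upwards [eventually_ge_atTop 1] with k hk
      have : (0:ℝ) < k := by exact_mod_cast Nat.lt_of_lt_of_le Nat.zero_lt_one hk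
      exact one_div_pos.mpr this
  have hcomp := (key H h0 h1 hH2).comp hinv
  apply hcomp.congr'
  filter_upwards [eventually_ge_atTop 1] with k hk
  have hx : (1:ℝ) ≤ (k:ℝ) := by exact_mod_cast hk
  have hx0 : (0:ℝ) < k := lt_of_lt_of_le zero_lt_one hx
  set x : ℝ := (k:ℝ) with hxdef
  have hxne : x ≠ 0 := ne_of_gt hx0
  have e1 : (x + 1) ^ (2 * H) = x ^ (2 * H) * (1 + 1 / x) ^ (2 * H) := by
    rw [← Real.mul_rpow (le_of_lt hx0) (by positivity)]
    congr 1
    field_simp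
  have e2 : (x - 1) ^ (2 * H) = x ^ (2 * H) * (1 - 1 / x) ^ (2 * H) := by
    rw [← Real.mul_rpow (le_of_lt hx0) (by nlinarith [div_le_one_of_le₀ hx (le_of_lt hx0)])]
    congr 1
    field_simp
  have e3 : x ^ (2 * H - 2) = x ^ (2 * H) / x ^ (2:ℕ) := by
    rw [← Real.rpow_natCast x 2, ← Real.rpow_sub hx0]
    norm_num
  have hxp : x ^ (2 * H) ≠ 0 := by positivity
  simp only [Function.comp_apply, fgnRhoNat]
  rw [e1, e2, e3]
  rw [div_eq_div_iff (by positivity) (by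
      have hu : (0:ℝ) < 1 / x := by positivity
      positivity)]
  rw [← hxdef]
  field_simp
  ring
end

section
/- For H ∈ (0,1) and λ ∈ (0, π], the series ∑_{j∈ℤ} 1/|λ + 2jπ|^{2H+1} converges, and λ^{2H+1} ∑_{j∈ℤ} 1/|λ + 2jπ|^{2H+1} → 1 as λ → 0⁺. -/
open Filter Real

theorem fgn_spectral_sum_asymptotic (H : ℝ) (hH : H ∈ Set.Ioo (0 : ℝ) 1) :
    (∀ lam ∈ Set.Ioc (0 : ℝ) π,
        Summable (fun j : ℤ => 1 / |lam + 2 * (j : ℝ) * π| ^ (2 * H + 1))) ∧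
      Tendsto (fun lam : ℝ =>
          lam ^ (2 * H + 1) * ∑' j : ℤ, 1 / |lam + 2 * (j : ℝ) * π| ^ (2 * H + 1))
        (nhdsWithin 0 (Set.Ioi 0)) (nhds 1) := by
  obtain ⟨hH0, hH1⟩ := hH
  have hp1 : 1 < 2 * H + 1 := by linarith
  have hp0 : 0 < 2 * H + 1 := by linarith
  set p := 2 * H + 1 with hp_def
  have hπ := Real.pi_pos
  have h2π : (0:ℝ) < 2 * π := by linarith
  -- summability for any lam > 0
  have hsum : ∀ lam : ℝ, 0 < lam →
      Summable (fun j : ℤ => 1 / |lam + 2 * (j : ℝ) * π| ^ p) := by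
    intro lam hlam
    have h := ((Real.summable_one_div_int_add_rpow (lam / (2 * π)) p).mpr hp1).mul_left
      ((1 / (2 * π) ^ p))
    refine h.congr fun j => ?_
    have habs : |lam + 2 * (j : ℝ) * π| = (2 * π) * |(j : ℝ) + lam / (2 * π)| := by
      have h' : (2 * π) * |(j:ℝ) + lam / (2 * π)| = |(2 * π) * ((j:ℝ) + lam / (2 * π))| := by
        rw [abs_mul, abs_of_pos h2π]
      rw [h']
      congr 1
      field_simp
      ring
    rw [habs, Real.mul_rpow h2π.le (abs_nonneg _), one_div_mul_one_div]
  -- key comparison: for j ≠ 0 and lam ∈ (0, π], |j| * π ≤ |lam + 2 j π|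
  have key : ∀ lam ∈ Set.Ioc (0:ℝ) π, ∀ j : ℤ, j ≠ 0 →
      |(j:ℝ)| * π ≤ |lam + 2 * (j:ℝ) * π| := by
    rintro lam ⟨h1, h2⟩ j hj
    rcases lt_or_gt_of_ne hj with hneg | hpos
    · have hj'' : j ≤ -1 := by omega
      have hj' : (j:ℝ) ≤ -1 := by
        have := (Int.cast_le (R := ℝ)).mpr hj''; simpa using this
      have habs : |(j:ℝ)| = -(j:ℝ) := abs_of_neg (by linarith)
      have hx : lam + 2 * (j:ℝ) * π < 0 := by nlinarith
      rw [habs, abs_of_neg hx]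
      nlinarith
    · have hj'' : 1 ≤ j := hpos
      have hj' : (1:ℝ) ≤ (j:ℝ) := by exact_mod_cast hj''
      have habs : |(j:ℝ)| = (j:ℝ) := abs_of_pos (by linarith)
      have hx : 0 < lam + 2 * (j:ℝ) * π := by nlinarith
      rw [habs, abs_of_pos hx]
      nlinarith
  -- comparison function g and its sum C
  set g : ℤ → ℝ := fun j => (1 / π ^ p) * (1 / |(j:ℝ)| ^ p) with hg_def
  have hg_sum : Summable g := by
    refine ((summable_abs_int_rpow hp1).mul_left (1 / π ^ p)).congr fun j => ?_
    rw [hg_def]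
    simp [Real.rpow_neg (abs_nonneg _), one_div]
  set C := ∑' j, g j with hC_def
  have hg_nonneg : ∀ j, 0 ≤ g j := fun j => by positivity
  -- pointwise bound for j ≠ 0
  have hterm_le : ∀ lam ∈ Set.Ioc (0:ℝ) π, ∀ j : ℤ, j ≠ 0 →
      1 / |lam + 2 * (j:ℝ) * π| ^ p ≤ g j := by
    intro lam hlam j hj
    have hjabs : (0:ℝ) < |(j:ℝ)| := by
      simp only [abs_pos, ne_eq, Int.cast_eq_zero]; exact hj
    have hb : (0:ℝ) < |(j:ℝ)| * π := by positivity
    have h1 := key lam hlam j hj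
    have h2 : (|(j:ℝ)| * π) ^ p ≤ |lam + 2 * (j:ℝ) * π| ^ p :=
      Real.rpow_le_rpow hb.le h1 hp0.le
    have h3 : 1 / |lam + 2 * (j:ℝ) * π| ^ p ≤ 1 / (|(j:ℝ)| * π) ^ p :=
      one_div_le_one_div_of_le (Real.rpow_pos_of_pos hb p) h2
    refine h3.trans_eq ?_
    show 1 / (|(j:ℝ)| * π) ^ p = 1 / π ^ p * (1 / |(j:ℝ)| ^ p)
    rw [Real.mul_rpow (abs_nonneg _) hπ.le, one_div_mul_one_div, mul_comm]
  refine ⟨fun lam hlam => hsum lam hlam.1, ?_⟩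
  -- squeeze
  have hmem : Set.Ioc (0:ℝ) π ∈ nhdsWithin (0:ℝ) (Set.Ioi 0) := by
    have : Set.Iic π ∈ nhdsWithin (0:ℝ) (Set.Ioi 0) :=
      nhdsWithin_le_nhds (Iic_mem_nhds hπ)
    have h2 : Set.Ioi (0:ℝ) ∈ nhdsWithin (0:ℝ) (Set.Ioi 0) := self_mem_nhdsWithin
    filter_upwards [this, h2] with x hx1 hx2 using ⟨hx2, hx1⟩
  have hlow : ∀ᶠ lam in nhdsWithin (0:ℝ) (Set.Ioi 0),
      (1:ℝ) ≤ lam ^ p * ∑' j : ℤ, 1 / |lam + 2 * (j : ℝ) * π| ^ p := by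
    filter_upwards [hmem] with lam hlam
    have hlam0 := hlam.1
    have hS := hsum lam hlam0
    have h0 : 1 / lam ^ p ≤ ∑' j : ℤ, 1 / |lam + 2 * (j : ℝ) * π| ^ p := by
      have := hS.le_tsum 0 (fun j _ => by positivity)
      simpa [abs_of_pos hlam0] using this
    have hlp : 0 < lam ^ p := Real.rpow_pos_of_pos hlam0 p
    calc (1:ℝ) = lam ^ p * (1 / lam ^ p) := by field_simp
    _ ≤ _ := by exact mul_le_mul_of_nonneg_left h0 hlp.le
  have hhigh : ∀ᶠ lam in nhdsWithin (0:ℝ) (Set.Ioi 0),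
      lam ^ p * ∑' j : ℤ, 1 / |lam + 2 * (j : ℝ) * π| ^ p ≤ 1 + lam ^ p * C := by
    filter_upwards [hmem] with lam hlam
    have hlam0 := hlam.1
    have hS := hsum lam hlam0
    have hlp : 0 < lam ^ p := Real.rpow_pos_of_pos hlam0 p
    have hsplit : ∑' j : ℤ, 1 / |lam + 2 * (j : ℝ) * π| ^ p
        = 1 / lam ^ p + ∑' j : ℤ, if j = 0 then 0 else 1 / |lam + 2 * (j : ℝ) * π| ^ p := by
      have := hS.tsum_eq_add_tsum_ite 0
      simpa [abs_of_pos hlam0] using this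
    have htail : (∑' j : ℤ, if j = 0 then 0 else 1 / |lam + 2 * (j : ℝ) * π| ^ p) ≤ C := by
      refine Summable.tsum_le_tsum (fun j => ?_) ?_ hg_sum
      · by_cases hj : j = 0
        · simp [hj, hg_nonneg 0]
        · simp only [hj, if_false]
          exact hterm_le lam hlam j hj
      · refine Summable.of_nonneg_of_le (fun j => ?_) (fun j => ?_) hg_sum
        · rcases eq_or_ne j 0 with hj | hj
          · simp [hj]
          · simp only [if_neg hj]; positivity
        · by_cases hj : j = 0
          · simp [hj, hg_nonneg 0]
          · simp only [hj, if_false]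
            exact hterm_le lam hlam j hj
    calc lam ^ p * ∑' j : ℤ, 1 / |lam + 2 * (j : ℝ) * π| ^ p
        = lam ^ p * (1 / lam ^ p) + lam ^ p * ∑' j : ℤ, if j = 0 then 0 else 1 / |lam + 2 * (j : ℝ) * π| ^ p := by
          rw [hsplit]; ring
    _ ≤ 1 + lam ^ p * C := by
          have h1 : lam ^ p * (1 / lam ^ p) = 1 := by field_simp
          rw [h1]
          exact add_le_add le_rfl (mul_le_mul_of_nonneg_left htail hlp.le)
  have hrpow : Tendsto (fun lam : ℝ => lam ^ p) (nhdsWithin 0 (Set.Ioi 0)) (nhds 0) := by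
    have hc : ContinuousAt (fun x : ℝ => x ^ p) 0 :=
      Real.continuousAt_rpow_const 0 p (Or.inr hp0.le)
    have h' : Tendsto (fun x : ℝ => x ^ p) (nhdsWithin 0 (Set.Ioi 0)) (nhds ((0:ℝ) ^ p)) :=
      hc.tendsto.mono_left nhdsWithin_le_nhds
    simpa [Real.zero_rpow hp0.ne'] using h'
  have hhightendsto : Tendsto (fun lam : ℝ => 1 + lam ^ p * C)
      (nhdsWithin 0 (Set.Ioi 0)) (nhds 1) := by
    have : Tendsto (fun lam : ℝ => 1 + lam ^ p * C) (nhdsWithin 0 (Set.Ioi 0))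
        (nhds (1 + 0 * C)) := (tendsto_const_nhds.add (hrpow.mul_const C))
    simpa using this
  exact tendsto_of_tendsto_of_tendsto_of_le_of_le' tendsto_const_nhds hhightendsto hlow hhigh
end
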